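/- Let a ≠ b be letters and n ≥ 2. For words u ∈ aaa*, v ∈ a*b: there exists x ∈ a*baa with |v|_a < |u|_a, v ⋢ x, and u ⊑ x, if and only if u = aⁿ and v = aⁿ⁻¹b for some n ≥ 2. -/

import Mathlib

private lemma aux_sub {A : Type*} [DecidableEq A] (a b : A) (hab : a ≠ b) :
    ∀ l m : ℕ, (List.replicate m a ++ [b]).Sublist (List.replicate l a ++ [b, a, a]) → m ≤ l := by
  intro l
  induction l with
  | zero =>
    intro m h
    cases m with
    | zero => exact le_refl 0
    | succ m' =>
      exfalso
      rw [List.replicate_succ, List.cons_append] at h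
      simp only [List.replicate, List.nil_append] at h
      cases h with
      | cons _ h =>
        have := h.count_le b
        simp [List.count_cons, List.count_append, List.count_replicate,
          hab, Ne.symm hab] at this
      | cons_cons _ h => exact hab rfl
  | succ l ih =>
    intro m h
    cases m with
    | zero => omega
    | succ m' =>
      rw [List.replicate_succ, List.cons_append] at h
      rw [List.replicate_succ (n := l), List.cons_append] at h
      cases h with
      | cons _ h =>
        have : m' + 1 ≤ l := ih (m' + 1) (by rwa [List.replicate_succ, List.cons_append])
        omega
      | cons_cons _ h => exact Nat.succ_le_succ (ih m' h)

private lemma aux_easy {A : Type*} [DecidableEq A] (a b : A) {m l : ℕ} (h : m ≤ l) :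
    (List.replicate m a ++ [b]).Sublist (List.replicate l a ++ [b, a, a]) := by
  apply List.Sublist.append ((List.replicate_sublist_replicate a).2 h)
  exact List.Sublist.cons₂ b (List.nil_sublist _)

theorem step7_characterization {A : Type*} [DecidableEq A] (a b : A) (hab : a ≠ b)
    (u v : List A)
    (hu : ∃ n : ℕ, 2 ≤ n ∧ u = List.replicate n a)
    (hv : ∃ m : ℕ, v = List.replicate m a ++ [b]) :
    (∃ x : List A, (∃ l : ℕ, x = List.replicate l a ++ [b, a, a]) ∧
        v.count a < u.count a ∧ ¬ v.Sublist x ∧ u.Sublist x) ↔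
      ∃ n : ℕ, 2 ≤ n ∧ u = List.replicate n a ∧ v = List.replicate (n - 1) a ++ [b] := by
  obtain ⟨n, hn2, hun⟩ := hu
  obtain ⟨m, hvm⟩ := hv
  constructor
  · rintro ⟨x, ⟨l, hx⟩, hcount, hnsub, husub⟩
    subst hun hvm hx
    have hcu : (List.replicate n a).count a = n := by simp
    have hcv : (List.replicate m a ++ [b]).count a = m := by
      simp [List.count_append, List.count_cons, beq_iff_eq, hab, Ne.symm hab]
    rw [hcu, hcv] at hcount
    have hml : l < m := by
      by_contra hc
      exact hnsub (aux_easy a b (by omega))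
    have hnl : n ≤ l + 2 := by
      have := husub.count_le a
      simpa [List.count_append, List.count_cons, beq_iff_eq, hab, Ne.symm hab] using this
    have hm : m = n - 1 := by omega
    exact ⟨n, hn2, rfl, by rw [hm]⟩
  · rintro ⟨n', hn2', hu', hv'⟩
    refine ⟨List.replicate (n' - 2) a ++ [b, a, a], ⟨n' - 2, rfl⟩, ?_, ?_, ?_⟩
    · rw [hu', hv']
      simp [List.count_append, List.count_cons, beq_iff_eq, hab, Ne.symm hab]
      omega
    · intro h
      rw [hv'] at h
      have := aux_sub a b hab _ _ h
      omega
    · rw [hu']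
      have : n' = (n' - 2) + 2 := by omega
      rw [this, List.replicate_add]
      apply List.Sublist.append (List.Sublist.refl _)
      refine List.Sublist.cons b ?_
      exact List.Sublist.refl _
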